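/- For α > -1 and n ≥ 1, the polynomials L_n^α and L_{n-1}^{α+2} have no common zeros. -/

import Mathlib

open Finset

/-- Generalized Laguerre polynomial `L_n^α(x) = ∑_{k=0}^n (-1)^k C(n+α, n-k) x^k / k!`,
where `C(n+α, n-k) = (∏_{i=1}^{n-k} (α+k+i)) / (n-k)!`. -/
noncomputable def laguerre (α : ℝ) (n : ℕ) (x : ℝ) : ℝ :=
  ∑ k ∈ Finset.range (n + 1),
    (-1 : ℝ) ^ k * (∏ i ∈ Finset.range (n - k), (α + k + 1 + i)) /
      ((Nat.factorial (n - k) : ℝ) * (Nat.factorial k : ℝ)) * x ^ k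

noncomputable def Q (a : ℝ) (m : ℕ) : ℝ := ∏ i ∈ Finset.range m, (a + (i : ℝ))

lemma lagQ (α : ℝ) (n : ℕ) (x : ℝ) : laguerre α n x =
    ∑ k ∈ Finset.range (n + 1),
      (-1 : ℝ) ^ k * Q (α + k + 1) (n - k) /
        ((Nat.factorial (n - k) : ℝ) * (Nat.factorial k : ℝ)) * x ^ k := rfl

lemma Q_zero (a : ℝ) : Q a 0 = 1 := by simp [Q]

lemma Q_succ_right (a : ℝ) (m : ℕ) : Q a (m + 1) = Q a m * (a + m) :=
  Finset.prod_range_succ _ m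

lemma Q_succ_left (a : ℝ) (m : ℕ) : Q a (m + 1) = a * Q (a + 1) m := by
  rw [Q, Finset.prod_range_succ']
  have h : ∀ i ∈ Finset.range m, a + ((i : ℕ) + 1 : ℕ) = (a + 1) + (i : ℝ) := by
    intro i _; push_cast; ring
  rw [Finset.prod_congr rfl h]
  simp [Q]; ring

lemma Q_congr {a b : ℝ} (m : ℕ) (h : a = b) : Q a m = Q b m := by rw [h]

lemma Q_shift (a : ℝ) (m : ℕ) : a * Q (a + 1) m = Q a m * (a + m) := by
  rw [← Q_succ_left, Q_succ_right]
open Finset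

lemma sum_split (F G H : ℕ → ℝ) (n : ℕ)
    (h : ∀ k ≤ n, F k = G k + H k) (htop : F (n + 1) = G (n + 1)) :
    ∑ k ∈ range (n + 2), F k = ∑ k ∈ range (n + 2), G k + ∑ k ∈ range (n + 1), H k := by
  rw [Finset.sum_range_succ F, Finset.sum_range_succ G, htop,
    Finset.sum_congr rfl (fun k hk => h k (Nat.lt_succ_iff.mp (Finset.mem_range.mp hk))),
    Finset.sum_add_distrib]
  ring

lemma sum_shift_split (C A B : ℕ → ℝ) (x c d : ℝ) (n : ℕ)
    (h0 : c * A 0 = d * B 0)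
    (h1 : ∀ k < n, C k = c * A (k + 1) - d * B (k + 1))
    (h2 : C n = -(d * B (n + 1))) :
    x * ∑ k ∈ range (n + 1), C k * x ^ k =
      c * ∑ k ∈ range (n + 1), A k * x ^ k - d * ∑ k ∈ range (n + 2), B k * x ^ k := by
  have hterm : ∀ k ∈ range n, x * (C k * x ^ k)
      = c * (A (k+1) * x ^ (k+1)) - d * (B (k+1) * x ^ (k+1)) := by
    intro k hk
    have := h1 k (Finset.mem_range.mp hk)
    rw [this]; ring
  calc x * ∑ k ∈ range (n + 1), C k * x ^ k
      = ∑ k ∈ range n, (x * (C k * x ^ k)) + x * (C n * x ^ n) := by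
        rw [Finset.mul_sum, Finset.sum_range_succ]
    _ = ∑ k ∈ range n, (c * (A (k+1) * x ^ (k+1)) - d * (B (k+1) * x ^ (k+1)))
          - d * (B (n+1) * x ^ (n+1)) := by
        rw [Finset.sum_congr rfl hterm, h2]; ring
    _ = c * ((∑ k ∈ range n, A (k+1) * x ^ (k+1)) + A 0 * x ^ 0)
          - d * (((∑ k ∈ range n, B (k+1) * x ^ (k+1)) + B (n+1) * x ^ (n+1)) + B 0 * x ^ 0) := by
        rw [Finset.sum_sub_distrib, ← Finset.mul_sum, ← Finset.mul_sum]
        simp only [pow_zero]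
        linear_combination -h0
    _ = c * ∑ k ∈ range (n + 1), A k * x ^ k - d * ∑ k ∈ range (n + 2), B k * x ^ k := by
        rw [Finset.sum_range_succ' (fun k => A k * x ^ k) n,
          Finset.sum_range_succ' (fun k => B k * x ^ k) (n+1),
          Finset.sum_range_succ (fun k => B (k+1) * x ^ (k+1)) n]

lemma sum_shift_split2 (A B C : ℕ → ℝ) (x c d : ℝ) (n : ℕ)
    (h0 : c * A 0 = d * B 0)
    (h : ∀ k ≤ n, c * A (k + 1) = d * B (k + 1) + C k) :
    c * ∑ k ∈ range (n + 2), A k * x ^ k =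
      d * ∑ k ∈ range (n + 2), B k * x ^ k + x * ∑ k ∈ range (n + 1), C k * x ^ k := by
  have hterm : ∀ k ∈ range (n+1), c * (A (k+1) * x ^ (k+1))
      = d * (B (k+1) * x ^ (k+1)) + x * (C k * x ^ k) := by
    intro k hk
    have hh := h k (Nat.lt_succ_iff.mp (Finset.mem_range.mp hk))
    calc c * (A (k+1) * x ^ (k+1)) = (c * A (k+1)) * x ^ (k+1) := by ring
      _ = (d * B (k+1) + C k) * x ^ (k+1) := by rw [hh]
      _ = d * (B (k+1) * x ^ (k+1)) + x * (C k * x ^ k) := by ring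
  rw [Finset.sum_range_succ' (fun k => A k * x ^ k) (n+1),
    Finset.sum_range_succ' (fun k => B k * x ^ k) (n+1),
    mul_add, mul_add, Finset.mul_sum, Finset.mul_sum, Finset.mul_sum,
    Finset.sum_congr rfl hterm, Finset.sum_add_distrib]
  simp only [pow_zero]
  linear_combination h0
lemma fact_cast (m : ℕ) : (Nat.factorial (m+1) : ℝ) = ((m:ℝ)+1) * (Nat.factorial m : ℝ) := by
  rw [Nat.factorial_succ]; push_cast; ring

lemma factR_ne (m : ℕ) : (Nat.factorial m : ℝ) ≠ 0 :=
  Nat.cast_ne_zero.mpr (Nat.factorial_ne_zero m)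

/-- I1: L_{n+1}^{α+1} = L_{n+1}^α + L_n^{α+1} -/
lemma lag_I1 (α x : ℝ) (n : ℕ) :
    laguerre (α+1) (n+1) x = laguerre α (n+1) x + laguerre (α+1) n x := by
  rw [lagQ, lagQ, lagQ]
  apply sum_split
  · intro k hk
    obtain ⟨m, rfl⟩ := Nat.exists_eq_add_of_le hk
    have e1 : k + m + 1 - k = m + 1 := by omega
    have e2 : k + m - k = m := by omega
    rw [e1, e2, Q_succ_right, Q_succ_left,
      Q_congr m (show (α:ℝ)+↑k+1+1 = α+1+↑k+1 by ring), fact_cast]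
    field_simp
    ring
  · rw [Nat.sub_self, Q_zero, Q_zero]

/-- I2: x·L_n^{α+1} = (n+1+α)·L_n^α - (n+1)·L_{n+1}^α -/
lemma lag_I2 (α x : ℝ) (n : ℕ) :
    x * laguerre (α+1) n x =
      ((n:ℝ)+1+α) * laguerre α n x - ((n:ℝ)+1) * laguerre α (n+1) x := by
  rw [lagQ, lagQ, lagQ]
  apply sum_shift_split
  · simp only [Nat.sub_zero, pow_zero, Nat.cast_zero, Nat.factorial_zero, Nat.cast_one,
      mul_one, one_mul]
    rw [Q_congr n (show α + (0:ℝ) + 1 = α + 1 by ring),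
      Q_congr (n+1) (show α + (0:ℝ) + 1 = α + 1 by ring),
      Q_succ_right (α+1) n, fact_cast n]
    field_simp
    ring
  · intro k hk
    obtain ⟨m, rfl⟩ := Nat.exists_eq_add_of_le (show k + 1 ≤ n from hk)
    have e1 : k + 1 + m - k = m + 1 := by omega
    have e2 : k + 1 + m - (k + 1) = m := by omega
    have e3 : k + 1 + m + 1 - (k + 1) = m + 1 := by omega
    rw [e1, e2, e3,
      Q_congr (m+1) (show α + 1 + (k:ℝ) + 1 = α + (k:ℝ) + 2 by ring),
      Q_congr m (show α + ((k:ℕ)+1 : ℕ) + 1 = α + (k:ℝ) + 2 by push_cast; ring),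
      Q_congr (m+1) (show α + ((k:ℕ)+1 : ℕ) + 1 = α + (k:ℝ) + 2 by push_cast; ring),
      Q_succ_right (α + (k:ℝ) + 2) m, fact_cast m, fact_cast k]
    push_cast
    field_simp
    ring
  · simp only [Nat.sub_self, Q_zero, Nat.factorial_zero, Nat.cast_one, one_mul]
    rw [fact_cast n]
    field_simp
    ring

/-- I3: (α+1)·L_{m+1}^{α+1} = (α+m+2)·L_{m+1}^α + x·L_m^{α+2} -/
lemma lag_I3 (α x : ℝ) (m : ℕ) :
    (α+1) * laguerre (α+1) (m+1) x =
      (α+(m:ℝ)+2) * laguerre α (m+1) x + x * laguerre (α+2) m x := by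
  rw [lagQ, lagQ, lagQ]
  apply sum_shift_split2
  · simp only [Nat.sub_zero, pow_zero, Nat.cast_zero, Nat.factorial_zero, Nat.cast_one,
      mul_one, one_mul]
    rw [Q_congr (m+1) (show α + 1 + (0:ℝ) + 1 = (α + 1) + 1 by ring),
      Q_congr (m+1) (show α + (0:ℝ) + 1 = α + 1 by ring)]
    have hs := Q_shift (α+1) (m+1)
    push_cast at hs ⊢
    field_simp
    linear_combination hs
  · intro k hk
    obtain ⟨p, rfl⟩ := Nat.exists_eq_add_of_le hk
    have e1 : k + p + 1 - (k + 1) = p := by omega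
    have e2 : k + p - k = p := by omega
    rw [e1, e2,
      Q_congr p (show α + 1 + ((k:ℕ)+1 : ℕ) + 1 = (α + (k:ℝ) + 2) + 1 by push_cast; ring),
      Q_congr p (show α + ((k:ℕ)+1 : ℕ) + 1 = α + (k:ℝ) + 2 by push_cast; ring),
      Q_congr p (show α + 2 + (k:ℝ) + 1 = (α + (k:ℝ) + 2) + 1 by ring),
      fact_cast k]
    have hs := Q_shift (α + (k:ℝ) + 2) p
    push_cast
    field_simp
    linear_combination (-((-1:ℝ)^k)) * hs

lemma lag_zero (α x : ℝ) : laguerre α 0 x = 1 := by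
  simp [laguerre]

/-- L_n^α and L_n^{α+1} have no common zeros (α > -1). -/
lemma lag_consec_no_common (n : ℕ) : ∀ α : ℝ, α > -1 → ∀ x : ℝ,
    ¬(laguerre α n x = 0 ∧ laguerre (α+1) n x = 0) := by
  induction n with
  | zero =>
    rintro α hα x ⟨h1, -⟩
    rw [lag_zero] at h1
    norm_num at h1
  | succ n ih =>
    rintro α hα x ⟨h1, h2⟩
    have hmid : laguerre (α+1) n x = 0 := by
      have h := lag_I1 α x n
      rw [h1, h2] at h
      linarith
    have hI2 := lag_I2 α x n
    rw [hmid, h1] at hI2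
    have hpos : ((n:ℝ) + 1 + α) ≠ 0 := by
      have : (0:ℝ) ≤ (n:ℝ) := Nat.cast_nonneg n
      linarith
    have hL : laguerre α n x = 0 := by
      have : ((n:ℝ) + 1 + α) * laguerre α n x = 0 := by linarith
      exact (mul_eq_zero.mp this).resolve_left hpos
    exact ih α hα x ⟨hL, hmid⟩

theorem laguerre_no_common_zeros (α : ℝ) (hα : α > -1) (n : ℕ) (hn : 1 ≤ n) (x : ℝ) :
    ¬(laguerre α n x = 0 ∧ laguerre (α + 2) (n - 1) x = 0) := by
  rintro ⟨h1, h2⟩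
  obtain ⟨m, rfl⟩ : ∃ m, n = m + 1 := ⟨n - 1, by omega⟩
  have hm : m + 1 - 1 = m := by omega
  rw [hm] at h2
  have hI3 := lag_I3 α x m
  rw [h1, h2] at hI3
  have hne : α + 1 ≠ 0 := by linarith
  have hL : laguerre (α+1) (m+1) x = 0 := by
    have : (α+1) * laguerre (α+1) (m+1) x = 0 := by linarith
    exact (mul_eq_zero.mp this).resolve_left hne
  exact lag_consec_no_common (m+1) α hα x ⟨h1, hL⟩
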